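/- For the star K_{1,n-1} on n vertices, the number of subtrees is f(K_{1,n-1}) = 2^{n-1} + n - 1, and for every tree T on n vertices, f(T) ≤ 2^{n-1} + n - 1, with equality if and only if T is the star. -/

import Mathlib

open SimpleGraph

/-- The total number of subtrees of `G`: nonempty connected induced sub-vertex-sets. -/
noncomputable def numSubtrees {V : Type*} [Fintype V] (G : SimpleGraph V) : ℕ :=
  Set.ncard {s : Set V | s.Nonempty ∧ (G.induce s).Connected}

/-- `G` is a star with center `c` (`K_{1,n-1}`): the edges are exactly those
joining `c` to the other vertices. -/
def IsStar {V : Type*} (G : SimpleGraph V) (c : V) : Prop :=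
  ∀ v w : V, G.Adj v w ↔ v ≠ w ∧ (v = c ∨ w = c)

set_option linter.unusedSectionVars false
set_option linter.unusedVariables false

section Aux
variable {V : Type*} [DecidableEq V] {T : SimpleGraph V} {c : V}


/-- A walk inside a connected induced subset, as a path in `T` with support in `s`. -/
lemma aux_exists_path_in_set {s : Set V} (hs : (T.induce s).Connected)
    {u v : V} (hu : u ∈ s) (hv : v ∈ s) :
    ∃ p : T.Walk u v, p.IsPath ∧ ∀ x ∈ p.support, x ∈ s := by
  obtain ⟨w⟩ := hs.preconnected ⟨u, hu⟩ ⟨v, hv⟩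
  refine ⟨(w.map (Embedding.induce s).toHom).bypass, Walk.bypass_isPath _, fun x hx => ?_⟩
  have hx' := Walk.support_bypass_subset _ hx
  erw [Walk.support_map] at hx'
  obtain ⟨⟨y, hy⟩, _, rfl⟩ := List.mem_map.mp hx'
  exact hy


lemma aux_exists_shortest_path (hc : T.Connected) (u v : V) :
    ∃ p : T.Walk u v, p.IsPath ∧ p.length = T.dist u v := by
  obtain ⟨w, hw⟩ := hc.exists_walk_length_eq_dist u v
  refine ⟨w.bypass, w.bypass_isPath, le_antisymm ?_ (dist_le _)⟩
  rw [← hw]; exact w.length_bypass_le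

lemma aux_dist_split (hc : T.Connected) {u v : V} {p : T.Walk u v}
    (hp : p.length = T.dist u v) {x : V} (hx : x ∈ p.support) :
    T.dist u x + T.dist x v = T.dist u v := by
  have hspec := p.take_spec hx
  have hlen : (p.takeUntil x hx).length + (p.dropUntil x hx).length = p.length := by
    rw [← Walk.length_append, hspec]
  have h1 : T.dist u x ≤ (p.takeUntil x hx).length := dist_le _
  have h2 : T.dist x v ≤ (p.dropUntil x hx).length := dist_le _
  have h3 : T.dist u v ≤ T.dist u x + T.dist x v := hc.dist_triangle
  omega


lemma aux_isPath_concat {u v w : V} {p : T.Walk u v} (hp : p.IsPath)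
    (hw : w ∉ p.support) (h : T.Adj v w) : (p.concat h).IsPath := by
  rw [← Walk.isPath_reverse_iff, Walk.reverse_concat]
  rw [Walk.cons_isPath_iff]
  exact ⟨(Walk.isPath_reverse_iff p).mpr hp, by simpa [Walk.support_reverse] using hw⟩

/-- In a tree, adjacent vertices have different distance to any root. -/
lemma aux_adj_dist_ne (hT : T.IsTree) (r : V) {x y : V} (hxy : T.Adj x y) :
    T.dist r x ≠ T.dist r y := by
  intro heq
  have hc := hT.isConnected
  obtain ⟨q, hq, hqlen⟩ := aux_exists_shortest_path hc r y
  have hxq : x ∉ q.support := by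
    intro hx
    have := aux_dist_split hc hqlen hx
    have hone : T.dist x y = 1 := dist_eq_one_iff_adj.mpr hxy
    omega
  have hpath : (q.concat hxy.symm).IsPath := aux_isPath_concat hq hxq hxy.symm
  obtain ⟨p, hp, hplen⟩ := aux_exists_shortest_path hc r x
  have := hT.IsAcyclic.path_unique ⟨p, hp⟩ ⟨q.concat hxy.symm, hpath⟩
  have hval : p = q.concat hxy.symm := congrArg Subtype.val this
  have := congrArg Walk.length hval
  rw [Walk.length_concat] at this
  omega

/-- In a tree, adjacent vertices have distances to the root differing by one. -/
lemma aux_adj_dist (hT : T.IsTree) (r : V) {x y : V} (hxy : T.Adj x y) :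
    T.dist r y = T.dist r x + 1 ∨ T.dist r x = T.dist r y + 1 := by
  have h1 : T.dist x y = 1 := dist_eq_one_iff_adj.mpr hxy
  have h2 : T.dist r y ≤ T.dist r x + T.dist x y := hT.isConnected.dist_triangle
  have h3 : T.dist r x ≤ T.dist r y + T.dist y x := hT.isConnected.dist_triangle
  have h4 : T.dist y x = 1 := dist_eq_one_iff_adj.mpr hxy.symm
  have := aux_adj_dist_ne hT r hxy
  omega

/-- Unique parent: two neighbours of `u` strictly closer to the root agree. -/
lemma aux_unique_parent (hT : T.IsTree) (r : V) {x y u : V}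
    (hx : T.Adj x u) (hy : T.Adj y u)
    (hxd : T.dist r x < T.dist r u) (hyd : T.dist r y < T.dist r u) : x = y := by
  have hc := hT.isConnected
  have hdx : T.dist r u = T.dist r x + 1 := by
    rcases aux_adj_dist hT r hx with h | h <;> omega
  have hdy : T.dist r u = T.dist r y + 1 := by
    rcases aux_adj_dist hT r hy with h | h <;> omega
  obtain ⟨p, hp, hplen⟩ := aux_exists_shortest_path hc r x
  obtain ⟨q, hq, hqlen⟩ := aux_exists_shortest_path hc r y
  have hup : u ∉ p.support := by
    intro h
    have := aux_dist_split hc hplen h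
    omega
  have huq : u ∉ q.support := by
    intro h
    have := aux_dist_split hc hqlen h
    omega
  have h1 : (p.concat hx).IsPath := aux_isPath_concat hp hup hx
  have h2 : (q.concat hy).IsPath := aux_isPath_concat hq huq hy
  have := hT.IsAcyclic.path_unique ⟨p.concat hx, h1⟩ ⟨q.concat hy, h2⟩
  have hval : p.concat hx = q.concat hy := congrArg Subtype.val this
  -- compare the penultimate vertex
  have hxyd : T.dist r x = T.dist r y := by omega
  have e1 : (p.concat hx).getVert (T.dist r x) = x := by
    rw [Walk.concat_eq_append, Walk.getVert_append, hplen]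
    simp
  have e2 : (q.concat hy).getVert (T.dist r x) = y := by
    rw [Walk.concat_eq_append, Walk.getVert_append, hqlen, hxyd]
    simp
  rw [← e1, ← e2, hval]

lemma aux_getVert_injOn {u v : V} {p : T.Walk u v} (hp : p.IsPath) :
    ∀ i ≤ p.length, ∀ j ≤ p.length, p.getVert i = p.getVert j → i = j := by
  induction p with
  | nil => intro i hi j hj _; simp at hi hj; omega
  | cons h q ih =>
    rename_i a b c hadj
    rw [Walk.cons_isPath_iff] at hp
    intro i hi j hj hij
    match i, j with
    | 0, 0 => rfl
    | 0, j + 1 =>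
      exfalso; apply hp.2
      rw [Walk.mem_support_iff_exists_getVert]
      exact ⟨j, by simpa [Walk.getVert_cons_succ] using hij.symm, by simpa using hj⟩
    | i + 1, 0 =>
      exfalso; apply hp.2
      rw [Walk.mem_support_iff_exists_getVert]
      exact ⟨i, by simpa [Walk.getVert_cons_succ] using hij, by simpa using hi⟩
    | i + 1, j + 1 =>
      have := ih hp.1 i (by simpa using hi) j (by simpa using hj)
        (by simpa [Walk.getVert_cons_succ] using hij)
      omega

lemma aux_getVert_mem_support {u v : V} (p : T.Walk u v) {i : ℕ} (hi : i ≤ p.length) :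
    p.getVert i ∈ p.support :=
  Walk.mem_support_iff_exists_getVert.mpr ⟨i, rfl, hi⟩

/-- On a path in a tree, the maximum distance to the root is attained at an endpoint. -/
lemma aux_path_max_at_ends (hT : T.IsTree) (r : V) {a b : V} {p : T.Walk a b}
    (hp : p.IsPath) :
    ∀ i ≤ p.length, T.dist r (p.getVert i) ≤ max (T.dist r a) (T.dist r b) := by
  by_contra hcon
  push_neg at hcon
  obtain ⟨i, himax, hmax⟩ := Finset.exists_max_image (Finset.range (p.length + 1))
    (fun i => T.dist r (p.getVert i)) ⟨0, Finset.mem_range.mpr (by omega)⟩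
  rw [Finset.mem_range] at himax
  obtain ⟨j, hj, hjgt⟩ := hcon
  have hij : T.dist r (p.getVert j) ≤ T.dist r (p.getVert i) :=
    hmax j (Finset.mem_range.mpr (by omega))
  have hi0 : i ≠ 0 := by
    intro h; subst h
    simp only [Walk.getVert_zero] at hij
    have := le_max_left (T.dist r a) (T.dist r b)
    omega
  have hil : i ≠ p.length := by
    intro h; subst h
    rw [Walk.getVert_length] at hij
    have := le_max_right (T.dist r a) (T.dist r b)
    omega
  -- interior maximum: contradiction
  have hadj1 : T.Adj (p.getVert (i - 1)) (p.getVert i) := by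
    have := p.adj_getVert_succ (i := i - 1) (by omega)
    rwa [show i - 1 + 1 = i by omega] at this
  have hadj2 : T.Adj (p.getVert (i + 1)) (p.getVert i) :=
    (p.adj_getVert_succ (by omega)).symm
  have hd1 : T.dist r (p.getVert (i - 1)) < T.dist r (p.getVert i) :=
    lt_of_le_of_ne (hmax _ (Finset.mem_range.mpr (by omega)))
      (aux_adj_dist_ne hT r hadj1)
  have hd2 : T.dist r (p.getVert (i + 1)) < T.dist r (p.getVert i) :=
    lt_of_le_of_ne (hmax _ (Finset.mem_range.mpr (by omega)))
      (aux_adj_dist_ne hT r hadj2)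
  have := aux_unique_parent hT r hadj1 hadj2 hd1 hd2
  have := aux_getVert_injOn hp (i - 1) (by omega) (i + 1) (by omega) this
  omega

/-- The vertex of a connected set closest to the root is unique. -/
lemma aux_unique_min (hT : T.IsTree) (r : V) {s : Set V} (hs : (T.induce s).Connected)
    {t₁ t₂ : V} (ht₁ : t₁ ∈ s) (ht₂ : t₂ ∈ s)
    (hm₁ : ∀ x ∈ s, T.dist r t₁ ≤ T.dist r x) (hm₂ : ∀ x ∈ s, T.dist r t₂ ≤ T.dist r x) :
    t₁ = t₂ := by
  by_contra hne
  obtain ⟨p, hp, hpsub⟩ := aux_exists_path_in_set hs ht₁ ht₂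
  have hd : T.dist r t₁ = T.dist r t₂ := le_antisymm (hm₁ t₂ ht₂) (hm₂ t₁ ht₁)
  have hlen : 0 < p.length := by
    rcases Nat.eq_zero_or_pos p.length with h | h
    · exact absurd (by cases p with | nil => rfl | cons h q => simp at h) hne
    · exact h
  have h1s : p.getVert 1 ∈ s := hpsub _ (aux_getVert_mem_support p (by omega))
  have hadj : T.Adj t₁ (p.getVert 1) := by
    have := p.adj_getVert_succ (i := 0) (by omega)
    simpa using this
  have hle : T.dist r (p.getVert 1) ≤ max (T.dist r t₁) (T.dist r t₂) :=
    aux_path_max_at_ends hT r hp 1 (by omega)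
  have hge : T.dist r t₁ ≤ T.dist r (p.getVert 1) := hm₁ _ h1s
  have := aux_adj_dist_ne hT r hadj
  omega

/-- An element one level below the unique minimum of a connected set is adjacent to it. -/
lemma aux_child_adj (hT : T.IsTree) (r : V) {s : Set V} (hs : (T.induce s).Connected)
    {a t : V} (ha : a ∈ s) (ht : t ∈ s) (hm : ∀ x ∈ s, T.dist r t ≤ T.dist r x)
    (hda : T.dist r a = T.dist r t + 1) : T.Adj t a := by
  have hne : a ≠ t := by intro h; subst h; omega
  obtain ⟨p, hp, hpsub⟩ := aux_exists_path_in_set hs ha ht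
  have hlen : 0 < p.length := by
    rcases Nat.eq_zero_or_pos p.length with h | h
    · exact absurd (by cases p with | nil => rfl | cons h q => simp at h) hne
    · exact h
  have h1s : p.getVert 1 ∈ s := hpsub _ (aux_getVert_mem_support p (by omega))
  have hadj : T.Adj a (p.getVert 1) := by
    have := p.adj_getVert_succ (i := 0) (by omega)
    simpa using this
  have hle : T.dist r (p.getVert 1) ≤ max (T.dist r a) (T.dist r t) :=
    aux_path_max_at_ends hT r hp 1 (by omega)
  have hmax : max (T.dist r a) (T.dist r t) = T.dist r a := by omega
  rw [hmax] at hle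
  have hd1 : T.dist r (p.getVert 1) = T.dist r t := by
    rcases aux_adj_dist hT r hadj with h | h
    · omega
    · have := hm _ h1s; omega
  have : p.getVert 1 = t :=
    aux_unique_min hT r hs h1s ht (fun x hx => hd1 ▸ hm x hx) hm
  rw [this] at hadj
  exact hadj.symm

/-- Some element of a connected set with at least two elements sits one level below
its minimum. -/
lemma aux_exists_child (hT : T.IsTree) (r : V) {s : Set V} (hs : (T.induce s).Connected)
    {b t : V} (hb : b ∈ s) (ht : t ∈ s) (hne : b ≠ t)
    (hm : ∀ x ∈ s, T.dist r t ≤ T.dist r x) :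
    ∃ a ∈ s, a ≠ t ∧ T.dist r a = T.dist r t + 1 := by
  obtain ⟨p, hp, hpsub⟩ := aux_exists_path_in_set hs hb ht
  have hlen : 0 < p.length := by
    rcases Nat.eq_zero_or_pos p.length with h | h
    · exact absurd (by cases p with | nil => rfl | cons h q => simp at h) hne
    · exact h
  have hmem : p.getVert (p.length - 1) ∈ s :=
    hpsub _ (aux_getVert_mem_support p (i := p.length - 1) (by omega))
  have hadj : T.Adj (p.getVert (p.length - 1)) t := by
    have := p.adj_getVert_succ (i := p.length - 1) (by omega)
    rwa [show p.length - 1 + 1 = p.length by omega, Walk.getVert_length] at this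
  refine ⟨p.getVert (p.length - 1), hmem, hadj.ne, ?_⟩
  have hmm := hm _ hmem
  rcases aux_adj_dist hT r hadj with h | h <;> omega

/-- Structure of small connected sets: two members are adjacent or share a common
neighbour in the set. -/
lemma aux_three_set (hT : T.IsTree) {s : Set V} (hfin : s.Finite)
    (hs : (T.induce s).Connected)
    {a b : V} (ha : a ∈ s) (hb : b ∈ s) (hcard : s.ncard ≤ 3) (hne : a ≠ b) :
    T.Adj a b ∨ ∃ t ∈ s, T.Adj a t ∧ T.Adj t b := by
  obtain ⟨p, hp, hpsub⟩ := aux_exists_path_in_set hs ha hb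
  have hsup : p.support.length ≤ 3 := by
    have hnd : p.support.Nodup := hp.support_nodup
    have hcardeq : p.support.toFinset.card = p.support.length := List.toFinset_card_of_nodup hnd
    have hsub : (↑p.support.toFinset : Set V) ⊆ s := by
      intro x hx
      simp only [Finset.coe_sort_coe, List.coe_toFinset, List.mem_toFinset] at hx ⊢
      exact hpsub _ (by simpa using hx)
    have hle := Set.ncard_le_ncard hsub hfin
    rw [Set.ncard_coe_finset] at hle
    omega
  have hplen : p.length ≤ 2 := by
    have := p.length_support
    omega
  have hlen : 0 < p.length := by
    rcases Nat.eq_zero_or_pos p.length with h | h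
    · exact absurd (by cases p with | nil => rfl | cons h q => simp at h) hne
    · exact h
  rcases Nat.lt_or_ge p.length 2 with h2 | h2
  · left
    have h1 : p.length = 1 := by omega
    have := p.adj_getVert_succ (i := 0) (by omega)
    simpa [← h1, Walk.getVert_length] using this
  · right
    have h2' : p.length = 2 := by omega
    refine ⟨p.getVert 1, hpsub _ (aux_getVert_mem_support p (by omega)), ?_, ?_⟩
    · simpa using p.adj_getVert_succ (i := 0) (by omega)
    · have := p.adj_getVert_succ (i := 1) (by omega)
      rwa [show (1 : ℕ) + 1 = p.length by omega, Walk.getVert_length] at this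


lemma aux_singleton_connected (T : SimpleGraph V) (v : V) :
    (T.induce ({v} : Set V)).Connected := by
  rw [connected_iff]
  refine ⟨fun a b => ?_, ⟨⟨v, rfl⟩⟩⟩
  have : a = b := Subtype.ext (by rw [a.2, b.2])
  exact this ▸ Reachable.refl a

lemma aux_sets_not_mem_ncard [Fintype V] (r : V) :
    ({A : Set V | r ∉ A}).ncard = 2 ^ (Fintype.card V - 1) := by
  have hrange : {A : Set V | r ∉ A} =
      Set.range (fun B : Set {x : V // x ≠ r} => (Subtype.val '' B : Set V)) := by
    ext A
    simp only [Set.mem_setOf_eq, Set.mem_range]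
    constructor
    · intro hA
      refine ⟨{x | ↑x ∈ A}, ?_⟩
      ext v
      simp only [Set.mem_image, Set.mem_setOf_eq]
      constructor
      · rintro ⟨x, hx, rfl⟩; exact hx
      · intro hv
        exact ⟨⟨v, fun h => hA (h ▸ hv)⟩, hv, rfl⟩
    · rintro ⟨B, rfl⟩
      rintro ⟨x, _, hx⟩
      exact x.2 hx
  rw [hrange, ← Set.image_univ,
    Set.ncard_image_of_injective _ (Set.image_injective.mpr Subtype.val_injective),
    Set.ncard_univ, Nat.card_eq_fintype_card, Fintype.card_set,
    Fintype.card_subtype_compl, Fintype.card_subtype_eq]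

lemma aux_sets_mem_ncard [Fintype V] (r : V) :
    ({A : Set V | r ∈ A}).ncard = 2 ^ (Fintype.card V - 1) := by
  have h : {A : Set V | r ∈ A} = compl '' {A : Set V | r ∉ A} := by
    ext A
    simp only [Set.mem_setOf_eq, Set.mem_image]
    constructor
    · intro hA; exact ⟨Aᶜ, by simp [hA], by simp⟩
    · rintro ⟨B, hB, rfl⟩; simpa using hB
  rw [h, Set.ncard_image_of_injective _ compl_injective, aux_sets_not_mem_ncard]

lemma aux_range_singleton_ncard [Fintype V] :
    (Set.range (fun v : V => ({v} : Set V))).ncard = Fintype.card V := by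
  rw [← Set.image_univ, Set.ncard_image_of_injective _ Set.singleton_injective,
    Set.ncard_univ, Nat.card_eq_fintype_card]

lemma aux_isStar_of_adj (hT : T.IsTree) (c : V) (h : ∀ v, v ≠ c → T.Adj c v) :
    IsStar T c := by
  intro v w
  constructor
  · intro hvw
    refine ⟨hvw.ne, ?_⟩
    by_contra hcon
    push_neg at hcon
    obtain ⟨hvc, hwc⟩ := hcon
    -- two distinct paths from v to w
    have h1 : T.Adj v c := (h v hvc).symm
    have h2 : T.Adj c w := h w hwc
    have hp2 : (Walk.cons h1 (Walk.cons h2 Walk.nil)).IsPath := by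
      simp [Walk.isPath_def, hvc, hwc, hvw.ne, hvw.ne', Ne.symm hvc, Ne.symm hwc]
    have := hT.IsAcyclic.path_unique (Path.singleton hvw)
      ⟨Walk.cons h1 (Walk.cons h2 Walk.nil), hp2⟩
    have hval := congrArg (fun p => (Subtype.val p).length) this
    simp [Path.singleton] at hval
  · rintro ⟨hne, rfl | rfl⟩
    · exact h w (Ne.symm hne)
    · exact (h v hne).symm

lemma aux_star_subtree_char (hstar : IsStar T c) :
    {s : Set V | s.Nonempty ∧ (T.induce s).Connected} =
      {s : Set V | c ∈ s} ∪ Set.range (fun v : V => ({v} : Set V)) := by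
  ext s
  simp only [Set.mem_setOf_eq, Set.mem_union, Set.mem_range]
  constructor
  · rintro ⟨⟨a, ha⟩, hconn⟩
    by_cases hc : c ∈ s
    · exact Or.inl hc
    · refine Or.inr ⟨a, (Set.eq_singleton_iff_unique_mem.mpr ⟨ha, fun b hb => ?_⟩).symm⟩
      by_contra hba
      obtain ⟨p, hp, hpsub⟩ := aux_exists_path_in_set hconn hb ha
      have hlen : 0 < p.length := by
        rcases Nat.eq_zero_or_pos p.length with h | h
        · exact absurd (by cases p with | nil => rfl | cons h q => simp at h) hba
        · exact h
      have hadj : T.Adj b (p.getVert 1) := by simpa using p.adj_getVert_succ (i := 0) hlen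
      have h1s : p.getVert 1 ∈ s :=
        hpsub _ (aux_getVert_mem_support p (i := 1) (by omega))
      rcases ((hstar b (p.getVert 1)).mp hadj).2 with h | h
      · exact hc (h ▸ hb)
      · exact hc (h ▸ h1s)
  · rintro (hc | ⟨v, rfl⟩)
    · refine ⟨⟨c, hc⟩, ?_⟩
      rw [connected_iff]
      have key : ∀ (x : V) (hx : x ∈ s), (T.induce s).Reachable ⟨x, hx⟩ ⟨c, hc⟩ := by
        intro x hx
        by_cases hxc : x = c
        · subst hxc; exact Reachable.refl _
        · have hadj : T.Adj x c := (hstar x c).mpr ⟨hxc, Or.inr rfl⟩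
          exact Adj.reachable (by exact hadj)
      exact ⟨fun a b => (key a.1 a.2).trans (key b.1 b.2).symm, ⟨⟨c, hc⟩⟩⟩
    · exact ⟨⟨v, rfl⟩, aux_singleton_connected T v⟩

lemma aux_star_count [Fintype V] (hstar : IsStar T c) :
    numSubtrees T = 2 ^ (Fintype.card V - 1) + Fintype.card V - 1 := by
  have hn1 : 1 ≤ Fintype.card V := Fintype.card_pos_iff.mpr ⟨c⟩
  rw [numSubtrees, aux_star_subtree_char hstar]
  have hsplit : {s : Set V | c ∈ s} ∪ Set.range (fun v : V => ({v} : Set V)) =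
      {s : Set V | c ∈ s} ∪
        (Set.range (fun v : V => ({v} : Set V)) \ {s : Set V | c ∈ s}) := by
    rw [Set.union_diff_self]
  rw [hsplit, Set.ncard_union_eq (Set.disjoint_sdiff_right) (Set.toFinite _) (Set.toFinite _),
    aux_sets_mem_ncard]
  have himg : Set.range (fun v : V => ({v} : Set V)) \ {s : Set V | c ∈ s} =
      (fun v : V => ({v} : Set V)) '' {v : V | v ≠ c} := by
    ext s
    simp only [Set.mem_diff, Set.mem_range, Set.mem_setOf_eq, Set.mem_image]
    constructor
    · rintro ⟨⟨v, rfl⟩, hc⟩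
      exact ⟨v, fun h => hc (by simp [h]), rfl⟩
    · rintro ⟨v, hv, rfl⟩
      exact ⟨⟨v, rfl⟩, by simpa using fun h => hv h.symm⟩
  rw [himg, Set.ncard_image_of_injective _ Set.singleton_injective]
  have : {v : V | v ≠ c} = Set.univ \ {c} := by ext; simp
  rw [this, Set.ncard_diff_singleton_of_mem (Set.mem_univ c), Set.ncard_univ,
    Nat.card_eq_fintype_card]
  have h2 : 1 ≤ 2 ^ (Fintype.card V - 1) := Nat.one_le_two_pow
  omega

open scoped Classical in
noncomputable def auxTop (T : SimpleGraph V) (r : V) (s : Set V) : V :=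
  if h : ∃ t ∈ s, ∀ x ∈ s, T.dist r t ≤ T.dist r x then h.choose else r

lemma auxTop_spec [Fintype V] (T : SimpleGraph V) (r : V) {s : Set V} (hne : s.Nonempty) :
    auxTop T r s ∈ s ∧ ∀ x ∈ s, T.dist r (auxTop T r s) ≤ T.dist r x := by
  obtain ⟨t, ht, hmin⟩ := Set.exists_min_image s (T.dist r) (Set.toFinite s) hne
  have h : ∃ t ∈ s, ∀ x ∈ s, T.dist r t ≤ T.dist r x := ⟨t, ht, hmin⟩
  rw [auxTop, dif_pos h]
  exact h.choose_spec

/-- The top is the unique minimizer; all other elements are strictly further. -/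
lemma aux_top_strict [Fintype V] (hT : T.IsTree) (r : V) {s : Set V}
    (hs : (T.induce s).Connected) (hne : s.Nonempty) {a : V} (ha : a ∈ s)
    (hane : a ≠ auxTop T r s) : T.dist r (auxTop T r s) < T.dist r a := by
  obtain ⟨htmem, htmin⟩ := auxTop_spec T r hne
  rcases lt_or_eq_of_le (htmin a ha) with h | h
  · exact h
  · exact absurd (aux_unique_min hT r hs ha htmem
      (fun x hx => h ▸ htmin x hx) htmin) hane

lemma aux_maps_to [Fintype V] (hT : T.IsTree) (r : V) {s : Set V}
    (hs : (T.induce s).Connected) (hcard : 1 < s.ncard) :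
    (s \ {auxTop T r s}).Nonempty ∧ r ∉ s \ {auxTop T r s} := by
  have hne : s.Nonempty := Set.nonempty_of_ncard_ne_zero (by omega)
  obtain ⟨htmem, htmin⟩ := auxTop_spec T r hne
  constructor
  · obtain ⟨a, ha, b, hb, hab⟩ := (Set.one_lt_ncard (Set.toFinite s)).mp hcard
    by_cases hat : a = auxTop T r s
    · exact ⟨b, hb, by rw [← hat]; simpa using hab.symm⟩
    · exact ⟨a, ha, by simpa using hat⟩
  · intro ⟨hrs, hrt⟩
    apply hrt
    have hrmin : ∀ x ∈ s, T.dist r r ≤ T.dist r x := by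
      intro x hx; simp [SimpleGraph.dist_self]
    exact Set.mem_singleton_iff.mpr
      (aux_unique_min hT r hs hrs htmem hrmin htmin)

lemma aux_injOn [Fintype V] (hT : T.IsTree) (r : V) :
    Set.InjOn (fun s => s \ {auxTop T r s})
      {s : Set V | (T.induce s).Connected ∧ 1 < s.ncard} := by
  rintro s₁ ⟨hs₁, hc₁⟩ s₂ ⟨hs₂, hc₂⟩ heq
  simp only at heq
  set t₁ := auxTop T r s₁ with ht₁def
  set t₂ := auxTop T r s₂ with ht₂def
  set A := s₁ \ {t₁} with hAdef
  have hA₂ : s₂ \ {t₂} = A := heq.symm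
  have hne₁ : s₁.Nonempty := Set.nonempty_of_ncard_ne_zero (by omega)
  have hne₂ : s₂.Nonempty := Set.nonempty_of_ncard_ne_zero (by omega)
  obtain ⟨ht₁mem, ht₁min⟩ := auxTop_spec T r (s := s₁) hne₁
  obtain ⟨ht₂mem, ht₂min⟩ := auxTop_spec T r (s := s₂) hne₂
  rw [← ht₁def] at ht₁mem ht₁min
  rw [← ht₂def] at ht₂mem ht₂min
  have hANe : A.Nonempty := by
    have := (aux_maps_to hT r hs₁ hc₁).1
    rw [← ht₁def] at this
    exact this
  obtain ⟨b, hb⟩ := hANe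
  have hbs₁ : b ∈ s₁ := hb.1
  have hbt₁ : b ≠ t₁ := hb.2
  have hbs₂ : b ∈ s₂ := (hA₂ ▸ hb).1
  have hbt₂ : b ≠ t₂ := (hA₂ ▸ hb).2
  obtain ⟨a₁, ha₁s, ha₁ne, ha₁d⟩ := aux_exists_child hT r hs₁ hbs₁ ht₁mem hbt₁ ht₁min
  obtain ⟨a₂, ha₂s, ha₂ne, ha₂d⟩ := aux_exists_child hT r hs₂ hbs₂ ht₂mem hbt₂ ht₂min
  have ha₁A : a₁ ∈ A := ⟨ha₁s, ha₁ne⟩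
  have ha₂A : a₂ ∈ A := hA₂ ▸ (⟨ha₂s, ha₂ne⟩ : a₂ ∈ s₂ \ {t₂})
  have ha₁s₂ : a₁ ∈ s₂ := (hA₂ ▸ ha₁A).1
  have ha₂s₁ : a₂ ∈ s₁ := ha₂A.1
  have ha₁t₂ : a₁ ≠ t₂ := (hA₂ ▸ ha₁A).2
  have ha₂t₁ : a₂ ≠ t₁ := ha₂A.2
  have hstrict₁ : T.dist r t₂ < T.dist r a₁ := by
    have := aux_top_strict hT r hs₂ hne₂ ha₁s₂ (ht₂def ▸ ha₁t₂)
    rwa [← ht₂def] at this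
  have hstrict₂ : T.dist r t₁ < T.dist r a₂ := by
    have := aux_top_strict hT r hs₁ hne₁ ha₂s₁ (ht₁def ▸ ha₂t₁)
    rwa [← ht₁def] at this
  have hd12 : T.dist r t₂ ≤ T.dist r t₁ := by omega
  have hd21 : T.dist r t₁ ≤ T.dist r t₂ := by omega
  have hdeq : T.dist r t₁ = T.dist r t₂ := le_antisymm hd21 hd12
  have hadj₁ : T.Adj t₁ a₁ := aux_child_adj hT r hs₁ ha₁s ht₁mem ht₁min ha₁d
  have hadj₂ : T.Adj t₂ a₁ := aux_child_adj hT r hs₂ ha₁s₂ ht₂mem ht₂min (by omega)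
  have htt : t₁ = t₂ :=
    aux_unique_parent hT r hadj₁ hadj₂ (by omega) (by omega)
  have hs₁A : s₁ = A ∪ {t₁} := by
    rw [hAdef, Set.diff_union_of_subset (Set.singleton_subset_iff.mpr ht₁mem)]
  have hs₂A : s₂ = A ∪ {t₂} := by
    rw [← hA₂, Set.diff_union_of_subset (Set.singleton_subset_iff.mpr ht₂mem)]
  rw [hs₁A, hs₂A, htt]

/-- Consequence of surjectivity of the top-removal map, on pairs. -/
lemma aux_pair [Fintype V] (hT : T.IsTree) (r : V)
    (hsurj : ∀ A ∈ {A : Set V | A.Nonempty ∧ r ∉ A},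
      ∃ s ∈ {s : Set V | (T.induce s).Connected ∧ 1 < s.ncard},
        s \ {auxTop T r s} = A)
    {a b : V} (har : a ≠ r) (hbr : b ≠ r) (hab : a ≠ b) :
    T.Adj a b ∨ ∃ t, T.Adj a t ∧ T.Adj t b ∧
      T.dist r t < T.dist r a ∧ T.dist r t < T.dist r b := by
  obtain ⟨s, ⟨hconn, hcard⟩, hs⟩ := hsurj {a, b}
    ⟨⟨a, by simp⟩, by simp [Ne.symm har, Ne.symm hbr]⟩
  have hne : s.Nonempty := Set.nonempty_of_ncard_ne_zero (by omega)
  obtain ⟨htmem, htmin⟩ := auxTop_spec T r (s := s) hne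
  have haA : a ∈ s \ {auxTop T r s} := by rw [hs]; simp
  have hbA : b ∈ s \ {auxTop T r s} := by rw [hs]; simp
  have hsub : s = insert a (insert b {auxTop T r s}) := by
    have := Set.diff_union_of_subset (Set.singleton_subset_iff.mpr htmem)
    rw [hs] at this
    conv_lhs => rw [← this]
    ext x; simp [or_comm, or_assoc, or_left_comm]
  have hcard3 : s.ncard ≤ 3 := by
    rw [hsub]
    have h1 := Set.ncard_insert_le a (insert b {auxTop T r s})
    have h2 := Set.ncard_insert_le b ({auxTop T r s} : Set V)
    have h3 : ({auxTop T r s} : Set V).ncard = 1 := Set.ncard_singleton _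
    omega
  have hsta : T.dist r (auxTop T r s) < T.dist r a :=
    aux_top_strict hT r hconn hne haA.1 (by simpa using haA.2)
  have hstb : T.dist r (auxTop T r s) < T.dist r b :=
    aux_top_strict hT r hconn hne hbA.1 (by simpa using hbA.2)
  rcases aux_three_set hT (Set.toFinite s) hconn haA.1 hbA.1 hcard3 hab with h | ⟨w, hws, hwa, hwb⟩
  · exact Or.inl h
  · rw [hsub] at hws
    rcases hws with rfl | rfl | rfl
    · exact absurd hwa (T.irrefl)
    · exact absurd hwb (T.irrefl)
    · exact Or.inr ⟨_, hwa, hwb, hsta, hstb⟩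

lemma aux_star_of_surj [Fintype V] (hT : T.IsTree) (r : V)
    (hpair : ∀ a b : V, a ≠ r → b ≠ r → a ≠ b →
      T.Adj a b ∨ ∃ t, T.Adj a t ∧ T.Adj t b ∧
        T.dist r t < T.dist r a ∧ T.dist r t < T.dist r b) :
    ∃ c, IsStar T c := by
  have hc := hT.isConnected
  by_cases hall : ∀ x, x ≠ r → T.Adj r x
  · exact ⟨r, aux_isStar_of_adj hT r hall⟩
  · push_neg at hall
    obtain ⟨v, hvr, hnadj⟩ := hall
    have hdv0 : 0 < T.dist r v := hc.pos_dist_of_ne (Ne.symm hvr)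
    have hdv1 : T.dist r v ≠ 1 := fun h => hnadj (dist_eq_one_iff_adj.mp h)
    have hdv : 2 ≤ T.dist r v := by omega
    -- find a neighbour u of r
    obtain ⟨p, hp, hplen⟩ := aux_exists_shortest_path hc r v
    have hlen : 0 < p.length := by omega
    set u := p.getVert 1 with hudef
    have hadjru : T.Adj r u := by simpa [hudef] using p.adj_getVert_succ (i := 0) hlen
    have hdu : T.dist r u = 1 := dist_eq_one_iff_adj.mpr hadjru
    have hur : u ≠ r := fun h => T.irrefl (h ▸ hadjru)
    have hvu : v ≠ u := fun h => by rw [h, hdu] at hdv; omega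
    -- v is adjacent to u
    have hadjvu : T.Adj v u := by
      rcases hpair v u hvr hur hvu with h | ⟨t, hvt, htu, htv', htu'⟩
      · exact h
      · exfalso
        rw [hdu] at htu'
        have ht0 : T.dist r t = 0 := by omega
        have : r = t := hc.dist_eq_zero_iff.mp ht0
        exact hnadj ((this ▸ hvt).symm)
    have hdv2 : T.dist r v = 2 := by
      rcases aux_adj_dist hT r hadjvu with h | h <;> omega
    refine ⟨u, aux_isStar_of_adj hT u ?_⟩
    intro x hxu
    by_cases hxr : x = r
    · exact hxr ▸ hadjru.symm
    · by_cases hd1 : T.dist r x = 1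
      · -- x would be a second depth-1 vertex; derive x = u, contradiction
        exfalso
        have hxv : x ≠ v := fun h => by rw [h, hdv2] at hd1; omega
        have hadjxv : T.Adj x v := by
          rcases hpair x v hxr hvr hxv with h | ⟨t, hxt, htv, htx', htv''⟩
          · exact h
          · exfalso
            rw [hd1] at htx'
            have ht0 : T.dist r t = 0 := by omega
            have : r = t := hc.dist_eq_zero_iff.mp ht0
            exact hnadj (this ▸ htv)
        exact hxu (aux_unique_parent hT r hadjxv hadjvu.symm (by omega) (by omega))
      · have hdx : 2 ≤ T.dist r x := by
          have : 0 < T.dist r x := hc.pos_dist_of_ne (Ne.symm hxr)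
          omega
        rcases hpair x u hxr hur hxu with h | ⟨t, hxt, htu, htx', htu'⟩
        · exact h.symm
        · exfalso
          rw [hdu] at htu'
          have ht0 : T.dist r t = 0 := by omega
          have hrt : r = t := hc.dist_eq_zero_iff.mp ht0
          have : T.Adj x r := hrt ▸ hxt
          have := dist_eq_one_iff_adj.mpr this.symm
          omega

end Aux

/-- The star `K_{1,n-1}` on `n` vertices has
`2^(n-1) + n - 1` subtrees; every tree `T` on `n` vertices satisfies
`f(T) ≤ 2^(n-1) + n - 1`, with equality if and only if `T` is a star. -/
theorem star_maximizes_subtrees {V : Type*} [Fintype V] (T : SimpleGraph V)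
    (hT : T.IsTree) (n : ℕ) (hn : 1 ≤ n) (hcard : Fintype.card V = n) :
    (∀ c : V, IsStar T c → numSubtrees T = 2 ^ (n - 1) + n - 1) ∧
      numSubtrees T ≤ 2 ^ (n - 1) + n - 1 ∧
      (numSubtrees T = 2 ^ (n - 1) + n - 1 ↔ ∃ c : V, IsStar T c) := by
    classical
  have hpos : 0 < Fintype.card V := by omega
  obtain ⟨r⟩ : Nonempty V := Fintype.card_pos_iff.mp hpos
  have hsplit : {s : Set V | s.Nonempty ∧ (T.induce s).Connected} =
      Set.range (fun v : V => ({v} : Set V)) ∪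
        {s : Set V | (T.induce s).Connected ∧ 1 < s.ncard} := by
    ext s
    simp only [Set.mem_setOf_eq, Set.mem_union, Set.mem_range]
    constructor
    · rintro ⟨hne, hconn⟩
      have h1 : 0 < s.ncard := (Set.ncard_pos (Set.toFinite s)).mpr hne
      rcases Nat.lt_or_ge 1 s.ncard with h | h
      · exact Or.inr ⟨hconn, h⟩
      · have h1' : s.ncard = 1 := by omega
        obtain ⟨a, rfl⟩ := Set.ncard_eq_one.mp h1'
        exact Or.inl ⟨a, rfl⟩
    · rintro (⟨v, rfl⟩ | ⟨hconn, hcard2⟩)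
      · exact ⟨⟨v, rfl⟩, aux_singleton_connected T v⟩
      · exact ⟨Set.nonempty_of_ncard_ne_zero (by omega), hconn⟩
  have hdisj : Disjoint (Set.range fun v : V => ({v} : Set V))
      {s : Set V | (T.induce s).Connected ∧ 1 < s.ncard} := by
    rw [Set.disjoint_left]
    rintro s ⟨v, rfl⟩ ⟨_, hgt⟩
    rw [Set.ncard_singleton] at hgt; omega
  have hcount : numSubtrees T =
      n + ({s : Set V | (T.induce s).Connected ∧ 1 < s.ncard}).ncard := by
    rw [numSubtrees, hsplit, Set.ncard_union_eq hdisj (Set.toFinite _) (Set.toFinite _),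
      aux_range_singleton_ncard, hcard]
  have himg : (fun s => s \ {auxTop T r s}) ''
      {s : Set V | (T.induce s).Connected ∧ 1 < s.ncard} ⊆
      {A : Set V | A.Nonempty ∧ r ∉ A} := by
    rintro A ⟨s, ⟨hconn, hgt⟩, rfl⟩
    exact aux_maps_to hT r hconn hgt
  have hinj := aux_injOn (T := T) hT r
  have hNcard : ({A : Set V | A.Nonempty ∧ r ∉ A}).ncard = 2 ^ (n - 1) - 1 := by
    have hEq : {A : Set V | A.Nonempty ∧ r ∉ A} = {A : Set V | r ∉ A} \ {∅} := by
      ext A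
      simp [Set.nonempty_iff_ne_empty, and_comm]
    rw [hEq, Set.ncard_diff_singleton_of_mem (by simp),
      aux_sets_not_mem_ncard, hcard]
  have hle : ({s : Set V | (T.induce s).Connected ∧ 1 < s.ncard}).ncard ≤
      2 ^ (n - 1) - 1 := by
    rw [← hNcard, ← Set.ncard_image_of_injOn hinj]
    exact Set.ncard_le_ncard himg (Set.toFinite _)
  have h2pow : 1 ≤ 2 ^ (n - 1) := Nat.one_le_two_pow
  have part1 : ∀ c : V, IsStar T c → numSubtrees T = 2 ^ (n - 1) + n - 1 := by
    intro c hstar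
    rw [aux_star_count hstar, hcard]
  refine ⟨part1, by omega, ⟨?_, fun ⟨c, hstar⟩ => part1 c hstar⟩⟩
  intro heq
  have hs2 : ({s : Set V | (T.induce s).Connected ∧ 1 < s.ncard}).ncard =
      2 ^ (n - 1) - 1 := by omega
  have himgeq : (fun s => s \ {auxTop T r s}) ''
      {s : Set V | (T.induce s).Connected ∧ 1 < s.ncard} =
      {A : Set V | A.Nonempty ∧ r ∉ A} := by
    apply Set.eq_of_subset_of_ncard_le himg _ (Set.toFinite _)
    rw [Set.ncard_image_of_injOn hinj, hNcard, hs2]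
  have hsurj : ∀ A ∈ {A : Set V | A.Nonempty ∧ r ∉ A},
      ∃ s ∈ {s : Set V | (T.induce s).Connected ∧ 1 < s.ncard},
        s \ {auxTop T r s} = A := by
    intro A hA
    rw [← himgeq] at hA
    obtain ⟨s, hsmem, hseq⟩ := hA
    exact ⟨s, hsmem, hseq⟩
  exact aux_star_of_surj hT r (fun a b har hbr hab => aux_pair hT r hsurj har hbr hab)
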